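/- Every probabilistically bounded statement of a bounded convergence theorem for i-measures in the norm topology holds: if μ : 𝓜 → L(E,F) is an i-measure on a set Z and (fₙ) ⊆ M_𝓜(Z,E) are uniformly bounded measurable functions converging pointwise in the norm of E to f : Z → E, then ∫_Z fₙ dμ → ∫_Z f dμ in the norm topology of F. -/

import Mathlib

open Filter Topology ENNReal

/-- A series of bounded operators `∑ Tₙ` is *independently convergent* if
`∑ Tₙ xₙ` converges in norm for every bounded sequence `(xₙ)`. -/
def IndepConv {E F : Type*} [NormedAddCommGroup E] [NormedSpace ℝ E]
    [NormedAddCommGroup F] [NormedSpace ℝ F] (T : ℕ → E →L[ℝ] F) : Prop :=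
  ∀ x : ℕ → E, (∃ C : ℝ, ∀ n, ‖x n‖ ≤ C) →
    ∃ y : F, Tendsto (fun N => ∑ n ∈ Finset.range N, T n (x n)) atTop (𝓝 y)

/-- An *i-measure* is an operator-valued set function which is countably additive in the
strong operator topology, and such that `∑ μ(Aₙ)` is independently convergent for every
sequence of pairwise disjoint measurable sets `(Aₙ)`. -/
def IsIMeasure {Z E F : Type*} [MeasurableSpace Z]
    [NormedAddCommGroup E] [NormedSpace ℝ E] [NormedAddCommGroup F] [NormedSpace ℝ F]
    (μ : Set Z → E →L[ℝ] F) : Prop :=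
  (∀ A : ℕ → Set Z, (∀ n, MeasurableSet (A n)) → Pairwise (Function.onFun Disjoint A) →
    ∀ x : E,
      Tendsto (fun N => ∑ n ∈ Finset.range N, μ (A n) x) atTop (𝓝 (μ (⋃ n, A n) x))) ∧
  (∀ A : ℕ → Set Z, (∀ n, MeasurableSet (A n)) → Pairwise (Function.onFun Disjoint A) →
    IndepConv fun n => μ (A n))

/-- The semivariation `‖μ‖_A` of an operator-valued set function `μ` on a set `A`. -/
noncomputable def semivar {Z E F : Type*} [MeasurableSpace Z]
    [NormedAddCommGroup E] [NormedSpace ℝ E] [NormedAddCommGroup F] [NormedSpace ℝ F]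
    (μ : Set Z → E →L[ℝ] F) (A : Set Z) : ℝ≥0∞ :=
  ⨆ (N : ℕ) (B : ℕ → Set Z) (_ : ∀ n, MeasurableSet (B n)) (_ : ∀ n, B n ⊆ A)
    (_ : Pairwise (Function.onFun Disjoint B)) (x : ℕ → E) (_ : ∀ n, ‖x n‖ ≤ 1),
    ENNReal.ofReal ‖∑ n ∈ Finset.range N, μ (B n) (x n)‖

/-- `HasCVIntegral μ g y`: the countably-valued measurable function `g` has integral `y`
with respect to `μ`, i.e. `y = ∑ₙ μ(Aₙ) eₙ` for a countable measurable partition `(Aₙ)` of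
the space on which `g` takes the constant values `eₙ`. -/
def HasCVIntegral {Z E F : Type*} [MeasurableSpace Z]
    [NormedAddCommGroup E] [NormedSpace ℝ E] [NormedAddCommGroup F] [NormedSpace ℝ F]
    (μ : Set Z → E →L[ℝ] F) (g : Z → E) (y : F) : Prop :=
  ∃ (e : ℕ → E) (A : ℕ → Set Z), (∀ n, MeasurableSet (A n)) ∧
    Pairwise (Function.onFun Disjoint A) ∧ (⋃ n, A n) = Set.univ ∧
    (∀ n, ∀ z ∈ A n, g z = e n) ∧
    Tendsto (fun N => ∑ n ∈ Finset.range N, μ (A n) (e n)) atTop (𝓝 y)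

/-- `HasIntegral μ f y`: the function `f` has integral `y` with respect to `μ`, obtained by
uniform approximation by countably-valued measurable functions. -/
def HasIntegral {Z E F : Type*} [MeasurableSpace Z]
    [NormedAddCommGroup E] [NormedSpace ℝ E] [NormedAddCommGroup F] [NormedSpace ℝ F]
    (μ : Set Z → E →L[ℝ] F) (f : Z → E) (y : F) : Prop :=
  ∃ (g : ℕ → Z → E) (w : ℕ → F),
    (∀ k, HasCVIntegral μ (g k) (w k)) ∧
    (∀ (k : ℕ) (z : Z), ‖g k z - f z‖ ≤ 1 / ((k : ℝ) + 1)) ∧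
    Tendsto w atTop (𝓝 y)

section Aux

variable {Z E F : Type*} [MeasurableSpace Z]
    [NormedAddCommGroup E] [NormedSpace ℝ E]
    [NormedAddCommGroup F] [NormedSpace ℝ F] [CompleteSpace F]
    {μ : Set Z → E →L[ℝ] F}

/-- Cornerstone: for pairwise disjoint measurable sets and a bounded sequence of vectors,
the series `∑ μ(Aₙ) xₙ` is unconditionally summable. -/
lemma indep_summable (hμ : IsIMeasure μ) {A : ℕ → Set Z} (hA : ∀ n, MeasurableSet (A n))
    (hd : Pairwise (Function.onFun Disjoint A)) {x : ℕ → E} (hx : ∃ C, ∀ n, ‖x n‖ ≤ C) :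
    Summable fun n => μ (A n) (x n) := by
  classical
  obtain ⟨C, hC⟩ := hx
  rw [summable_iff_vanishing]
  intro e he
  obtain ⟨ε, hε, hball⟩ := Metric.mem_nhds_iff.mp he
  by_contra hcon
  push_neg at hcon
  have step : ∀ s : Finset ℕ, ∃ t : Finset ℕ, Disjoint t s ∧
      ε ≤ ‖∑ i ∈ t, μ (A i) (x i)‖ := by
    intro s
    obtain ⟨t, hts, hne⟩ := hcon s
    refine ⟨t, hts, ?_⟩
    by_contra hlt
    push_neg at hlt
    exact hne (hball (by simpa [Metric.mem_ball, dist_zero_right] using hlt))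
  choose T hTdisj hTnorm using step
  set b : ℕ → ℕ := fun k =>
    Nat.rec 0 (fun _ bk => max (bk + 1) ((T (Finset.range bk)).sup id + 1)) k with hb
  have hb_succ : ∀ k, b (k + 1) = max (b k + 1) ((T (Finset.range (b k))).sup id + 1) :=
    fun k => rfl
  set t : ℕ → Finset ℕ := fun k => T (Finset.range (b k)) with ht
  have hmem_lb : ∀ k, ∀ i ∈ t k, b k ≤ i := by
    intro k i hi
    by_contra h
    push_neg at h
    exact (Finset.disjoint_left.mp (hTdisj _) hi) (Finset.mem_range.mpr h)
  have hmem_ub : ∀ k, ∀ i ∈ t k, i < b (k + 1) := by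
    intro k i hi
    have h1 : i ≤ (t k).sup id := Finset.le_sup (f := id) hi
    have h2 : b (k + 1) = max (b k + 1) ((t k).sup id + 1) := hb_succ k
    omega
  have hb_lt : ∀ k, b k < b (k + 1) := by
    intro k; have := hb_succ k; omega
  have hb_mono : StrictMono b := strictMono_nat_of_lt_succ hb_lt
  set S : Set ℕ := ⋃ k, (t k : Set ℕ) with hS
  set x' : ℕ → E := S.indicator x with hx'
  have hx'b : ∀ n, ‖x' n‖ ≤ max C 0 := by
    intro n
    by_cases hn : n ∈ S
    · rw [hx', Set.indicator_of_mem hn]; exact (hC n).trans (le_max_left _ _)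
    · rw [hx', Set.indicator_of_notMem hn]; simp
  obtain ⟨yy, hyy⟩ := hμ.2 A hA hd x' ⟨max C 0, hx'b⟩
  set u : ℕ → F := fun N => ∑ n ∈ Finset.range N, μ (A n) (x' n) with hu
  have key : ∀ k, ∑ i ∈ t k, μ (A i) (x i) = u (b (k + 1)) - u (b k) := by
    intro k
    have hsub1 : Finset.range (b k) ⊆ Finset.range (b (k + 1)) :=
      Finset.range_subset_range.mpr (hb_lt k).le
    rw [hu]
    rw [← Finset.sum_sdiff_eq_sub hsub1]
    have hsub2 : t k ⊆ Finset.range (b (k + 1)) \ Finset.range (b k) := by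
      intro i hi
      rw [Finset.mem_sdiff, Finset.mem_range, Finset.mem_range]
      exact ⟨hmem_ub k i hi, not_lt.mpr (hmem_lb k i hi)⟩
    rw [← Finset.sum_subset hsub2 ?hzero]
    · refine Finset.sum_congr rfl fun i hi => ?_
      have hiS : i ∈ S := Set.mem_iUnion.mpr ⟨k, hi⟩
      rw [hx', Set.indicator_of_mem hiS]
    · intro i hi hit
      have hiS : i ∉ S := by
        rw [hS]
        rw [Set.mem_iUnion]
        rintro ⟨j, hij⟩
        rw [Finset.mem_sdiff, Finset.mem_range, Finset.mem_range, not_lt] at hi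
        rcases lt_trichotomy j k with h | h | h
        · have : i < b (j + 1) := hmem_ub j i hij
          have : b (j + 1) ≤ b k := hb_mono.le_iff_le.mpr h
          omega
        · exact hit (h ▸ hij)
        · have : b (k + 1) ≤ b j := hb_mono.le_iff_le.mpr h
          have := hmem_lb j i hij
          omega
      rw [hx', Set.indicator_of_notMem hiS, map_zero]
  have hbtop : Tendsto b atTop atTop :=
    tendsto_atTop_mono (fun n => hb_mono.le_apply) tendsto_id
  have hbtop' : Tendsto (fun k => b (k + 1)) atTop atTop :=
    hbtop.comp (tendsto_add_atTop_nat 1)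
  have hdiff : Tendsto (fun k => u (b (k + 1)) - u (b k)) atTop (𝓝 (yy - yy)) :=
    (hyy.comp hbtop').sub (hyy.comp hbtop)
  rw [sub_self] at hdiff
  have : ∀ᶠ k in atTop, ‖u (b (k + 1)) - u (b k)‖ < ε :=
    hdiff.norm.eventually (gt_mem_nhds (by simpa using hε))
  obtain ⟨k, hk⟩ := this.exists
  rw [← key k] at hk
  exact absurd (hTnorm (Finset.range (b k))) (not_le.mpr hk)

lemma hasSum_meas (hμ : IsIMeasure μ) {A : ℕ → Set Z} (hA : ∀ n, MeasurableSet (A n))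
    (hd : Pairwise (Function.onFun Disjoint A)) (x : E) :
    HasSum (fun n => μ (A n) x) (μ (⋃ n, A n) x) := by
  have hs : Summable fun n => μ (A n) x :=
    indep_summable hμ hA hd ⟨‖x‖, fun n => le_rfl⟩
  have h1 := hs.hasSum.tendsto_sum_nat
  have h2 := hμ.1 A hA hd x
  exact (tendsto_nhds_unique h1 h2) ▸ hs.hasSum

lemma map_empty (hμ : IsIMeasure μ) (x : E) : μ (∅ : Set Z) x = 0 := by
  have hd : Pairwise (Function.onFun Disjoint (fun _ : ℕ => (∅ : Set Z))) := by
    intro i j _; simp [Function.onFun]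
  have h := hasSum_meas hμ (fun _ => MeasurableSet.empty) hd x
  rw [Set.iUnion_empty] at h
  exact (tendsto_nhds_unique tendsto_const_nhds h.summable.tendsto_atTop_zero)

lemma map_union (hμ : IsIMeasure μ) {S T' : Set Z} (hS : MeasurableSet S)
    (hT : MeasurableSet T') (hd : Disjoint S T') (x : E) :
    μ (S ∪ T') x = μ S x + μ T' x := by
  classical
  set A : ℕ → Set Z := fun n => if n = 0 then S else if n = 1 then T' else ∅ with hA
  have hmeas : ∀ n, MeasurableSet (A n) := by
    intro n; rw [hA]; dsimp only
    split_ifs <;> first | exact hS | exact hT | exact MeasurableSet.empty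
  have hdisj : Pairwise (Function.onFun Disjoint A) := by
    intro i j hij
    simp only [Function.onFun, hA]
    split_ifs with h1 h2 h3 h4 h5 h6 <;>
      first
        | (exfalso; omega)
        | exact hd
        | exact hd.symm
        | exact Set.disjoint_empty _
        | exact Set.empty_disjoint _
  have hU : (⋃ n, A n) = S ∪ T' := by
    apply Set.Subset.antisymm
    · refine Set.iUnion_subset fun n => ?_
      rw [hA]; dsimp only
      split_ifs
      · exact Set.subset_union_left
      · exact Set.subset_union_right
      · exact Set.empty_subset _
    · rintro z (h | h)
      · exact Set.mem_iUnion.mpr ⟨0, by simp [hA, h]⟩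
      · exact Set.mem_iUnion.mpr ⟨1, by simp [hA, h]⟩
  have h := hasSum_meas hμ hmeas hdisj x
  rw [hU] at h
  have h2 := h.tsum_eq
  rw [tsum_eq_sum (s := Finset.range 2) ?_] at h2
  · rw [← h2]
    rw [Finset.sum_range_succ, Finset.sum_range_one]
    simp [hA]
  · intro i hi
    rw [Finset.mem_range] at hi
    have : A i = ∅ := by rw [hA]; dsimp only; rw [if_neg (by omega), if_neg (by omega)]
    rw [this, map_empty hμ]

lemma map_biUnion (hμ : IsIMeasure μ) {C : ℕ → Set Z} (hC : ∀ n, MeasurableSet (C n))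
    (hd : Pairwise (Function.onFun Disjoint C)) (x : E) (J : ℕ) :
    μ (⋃ j ∈ Finset.range J, C j) x = ∑ j ∈ Finset.range J, μ (C j) x := by
  induction J with
  | zero => simp [map_empty hμ]
  | succ J ih =>
    have hU : (⋃ j ∈ Finset.range (J + 1), C j) = (⋃ j ∈ Finset.range J, C j) ∪ C J := by
      rw [Finset.range_add_one, Finset.set_biUnion_insert, Set.union_comm]
    have hmeas : MeasurableSet (⋃ j ∈ Finset.range J, C j) :=
      MeasurableSet.biUnion (Finset.range J).countable_toSet (fun b _ => hC b)
    have hdisj : Disjoint (⋃ j ∈ Finset.range J, C j) (C J) := by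
      rw [Set.disjoint_left]
      intro z hz hzJ
      obtain ⟨j, hj, hzj⟩ := Set.mem_iUnion₂.mp hz
      rw [Finset.mem_range] at hj
      exact Set.disjoint_left.mp (hd (show j ≠ J by omega)) hzj hzJ
    rw [hU, map_union hμ hmeas (hC J) hdisj x, ih, Finset.sum_range_succ]

/-- Key contradiction tool: one cannot have infinitely many "blocks" of disjoint
families of measurable sets with uniformly bounded vectors whose block sums all have
norm at least `ε > 0`. -/
lemma blocks_false (hμ : IsIMeasure μ) {D : ℕ → ℕ → Set Z} {v : ℕ → ℕ → E}
    (hmeas : ∀ k i, MeasurableSet (D k i))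
    (hdisj : ∀ p q : ℕ × ℕ, p ≠ q → Disjoint (D p.1 p.2) (D q.1 q.2))
    {c : ℝ} (hv : ∀ k i, ‖v k i‖ ≤ c) {ε : ℝ} (hε : 0 < ε)
    (hbig : ∀ k, ε ≤ ‖∑' i, μ (D k i) (v k i)‖) : False := by
  classical
  let e : ℕ ≃ ℕ × ℕ := (Denumerable.eqv (ℕ × ℕ)).symm
  set f : ℕ × ℕ → F := fun p => μ (D p.1 p.2) (v p.1 p.2) with hf
  have hsum : Summable f := by
    have h1 : Summable (f ∘ e) :=
      indep_summable hμ (fun n => hmeas _ _)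
        (fun n m hnm => hdisj _ _ (fun h => hnm (e.injective h)))
        ⟨c, fun n => hv _ _⟩
    exact (Equiv.summable_iff e).mp h1
  have hfib : ∀ k, Summable fun i => f (k, i) :=
    fun k => hsum.comp_injective (fun a b hab => by simpa using congrArg Prod.snd hab)
  have hg : Summable fun k => ∑' i, μ (D k i) (v k i) :=
    (hsum.hasSum.prod_fiberwise (fun k => (hfib k).hasSum)).summable
  have h0 := hg.tendsto_atTop_zero
  have : ∀ᶠ k in atTop, ‖∑' i, μ (D k i) (v k i)‖ < ε :=
    h0.norm.eventually (gt_mem_nhds (by simpa using hε))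
  obtain ⟨k, hk⟩ := this.exists
  exact absurd (hbig k) (not_le.mpr hk)

end Aux
section Semivar

variable {Z E F : Type*} [MeasurableSpace Z]
    [NormedAddCommGroup E] [NormedSpace ℝ E]
    [NormedAddCommGroup F] [NormedSpace ℝ F] [CompleteSpace F]
    {μ : Set Z → E →L[ℝ] F}

lemma le_semivar {A : Set Z} {N : ℕ} {B : ℕ → Set Z} (h1 : ∀ n, MeasurableSet (B n))
    (h2 : ∀ n, B n ⊆ A) (h3 : Pairwise (Function.onFun Disjoint B)) {x : ℕ → E}
    (h4 : ∀ n, ‖x n‖ ≤ 1) :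
    ENNReal.ofReal ‖∑ n ∈ Finset.range N, μ (B n) (x n)‖ ≤ semivar μ A :=
  le_iSup_of_le N (le_iSup_of_le B (le_iSup_of_le h1 (le_iSup_of_le h2
    (le_iSup_of_le h3 (le_iSup_of_le x (le_iSup_of_le h4 le_rfl))))))

lemma semivar_le {A : Set Z} {c : ℝ≥0∞}
    (h : ∀ (N : ℕ) (B : ℕ → Set Z), (∀ n, MeasurableSet (B n)) → (∀ n, B n ⊆ A) →
      Pairwise (Function.onFun Disjoint B) → ∀ x : ℕ → E, (∀ n, ‖x n‖ ≤ 1) →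
      ENNReal.ofReal ‖∑ n ∈ Finset.range N, μ (B n) (x n)‖ ≤ c) :
    semivar μ A ≤ c :=
  iSup_le fun N => iSup_le fun B => iSup_le fun h1 => iSup_le fun h2 => iSup_le fun h3 =>
    iSup_le fun x => iSup_le fun h4 => h N B h1 h2 h3 x h4

lemma semivar_mono {A A' : Set Z} (hAA : A ⊆ A') : semivar μ A ≤ semivar (F := F) μ A' :=
  semivar_le fun _ B h1 h2 h3 x h4 => le_semivar h1 (fun n => (h2 n).trans hAA) h3 h4

lemma semivar_witness {A : Set Z} {c : ℝ} (hc : 0 ≤ c)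
    (h : ENNReal.ofReal c < semivar μ A) :
    ∃ (N : ℕ) (B : ℕ → Set Z) (x : ℕ → E), (∀ n, MeasurableSet (B n)) ∧ (∀ n, B n ⊆ A) ∧
      Pairwise (Function.onFun Disjoint B) ∧ (∀ n, ‖x n‖ ≤ 1) ∧
      c < ‖∑ n ∈ Finset.range N, μ (B n) (x n)‖ := by
  by_contra hno
  push_neg at hno
  refine absurd (semivar_le fun N B h1 h2 h3 x h4 => ?_) (not_le.mpr h)
  exact ENNReal.ofReal_le_ofReal (hno N B x h1 h2 h3 h4)

lemma semivar_top_witness {A : Set Z} (h : semivar μ A = ⊤) (c : ℝ) :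
    ∃ (N : ℕ) (B : ℕ → Set Z) (x : ℕ → E), (∀ n, MeasurableSet (B n)) ∧ (∀ n, B n ⊆ A) ∧
      Pairwise (Function.onFun Disjoint B) ∧ (∀ n, ‖x n‖ ≤ 1) ∧
      c < ‖∑ n ∈ Finset.range N, μ (B n) (x n)‖ := by
  obtain ⟨N, B, x, h1, h2, h3, h4, h5⟩ :=
    semivar_witness (le_max_right c 0) (h ▸ ENNReal.ofReal_lt_top : ENNReal.ofReal (max c 0) < semivar μ A)
  exact ⟨N, B, x, h1, h2, h3, h4, (le_max_left c 0).trans_lt h5⟩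

lemma semivar_union_le (hμ : IsIMeasure μ) {A S1 S2 : Set Z} (h1 : MeasurableSet S1)
    (hsub : A ⊆ S1 ∪ S2) : semivar μ A ≤ semivar μ S1 + semivar μ S2 := by
  refine semivar_le fun N B hB hBA hBd x hx => ?_
  have key : ∀ n, μ (B n) (x n) = μ (B n ∩ S1) (x n) + μ (B n \ S1) (x n) := by
    intro n
    rw [← map_union hμ ((hB n).inter h1) ((hB n).diff h1)
      (disjoint_sdiff_self_right.mono_left Set.inter_subset_right) (x n),
      Set.inter_union_diff]
  rw [Finset.sum_congr rfl (fun n _ => key n), Finset.sum_add_distrib]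
  calc ENNReal.ofReal ‖(∑ n ∈ Finset.range N, μ (B n ∩ S1) (x n)) +
        ∑ n ∈ Finset.range N, μ (B n \ S1) (x n)‖
      ≤ ENNReal.ofReal (‖∑ n ∈ Finset.range N, μ (B n ∩ S1) (x n)‖ +
        ‖∑ n ∈ Finset.range N, μ (B n \ S1) (x n)‖) :=
        ENNReal.ofReal_le_ofReal (norm_add_le _ _)
    _ ≤ ENNReal.ofReal ‖∑ n ∈ Finset.range N, μ (B n ∩ S1) (x n)‖ +
        ENNReal.ofReal ‖∑ n ∈ Finset.range N, μ (B n \ S1) (x n)‖ :=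
        ENNReal.ofReal_add_le
    _ ≤ semivar μ S1 + semivar μ S2 := by
        refine add_le_add ?_ ?_
        · exact le_semivar (fun n => (hB n).inter h1) (fun n => Set.inter_subset_right)
            (fun i j hij => (hBd hij).mono Set.inter_subset_left Set.inter_subset_left) hx
        · refine le_semivar (fun n => (hB n).diff h1) ?_
            (fun i j hij => (hBd hij).mono Set.diff_subset Set.diff_subset) hx
          intro n z hz
          rcases hsub (hBA n hz.1) with h | h
          · exact absurd h hz.2
          · exact h

lemma norm_sum_le_semivar (hfin : semivar μ (Set.univ : Set Z) ≠ ⊤) {S : Set Z}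
    {B : ℕ → Set Z} (hB : ∀ n, MeasurableSet (B n)) (hBS : ∀ n, B n ⊆ S)
    (hBd : Pairwise (Function.onFun Disjoint B)) {x : ℕ → E} {c : ℝ} (hc : 0 < c)
    (hx : ∀ n, ‖x n‖ ≤ c) (N : ℕ) :
    ‖∑ n ∈ Finset.range N, μ (B n) (x n)‖ ≤ c * (semivar μ S).toReal := by
  have hfinS : semivar μ S ≠ ⊤ :=
    ((semivar_mono (Set.subset_univ S)).trans_lt (lt_top_iff_ne_top.mpr hfin)).ne
  set x' : ℕ → E := fun n => c⁻¹ • x n with hx'def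
  have hx1 : ∀ n, ‖x' n‖ ≤ 1 := by
    intro n
    rw [hx'def]
    dsimp only
    rw [norm_smul, norm_inv, Real.norm_of_nonneg hc.le]
    have h := mul_le_mul_of_nonneg_left (hx n) (inv_nonneg.mpr hc.le)
    rwa [inv_mul_cancel₀ hc.ne'] at h
  have hrw : ∑ n ∈ Finset.range N, μ (B n) (x n)
      = c • ∑ n ∈ Finset.range N, μ (B n) (x' n) := by
    rw [Finset.smul_sum]
    refine Finset.sum_congr rfl fun n _ => ?_
    rw [← map_smul, hx'def]
    dsimp only
    rw [smul_inv_smul₀ hc.ne']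
  have hle : ‖∑ n ∈ Finset.range N, μ (B n) (x' n)‖ ≤ (semivar μ S).toReal :=
    (ENNReal.ofReal_le_iff_le_toReal hfinS).mp (le_semivar hB hBS hBd hx1)
  rw [hrw, norm_smul, Real.norm_of_nonneg hc.le]
  exact mul_le_mul_of_nonneg_left hle hc.le

end Semivar
section OpBound

set_option linter.unusedSectionVars false

variable {Z E F : Type*} [MeasurableSpace Z]
    [NormedAddCommGroup E] [NormedSpace ℝ E]
    [NormedAddCommGroup F] [NormedSpace ℝ F] [CompleteSpace F]
    {μ : Set Z → E →L[ℝ] F}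

/-- Auxiliary: supremum of operator norms of `μ` over measurable subsets of `A`. -/
noncomputable def opBound (μ : Set Z → E →L[ℝ] F) (A : Set Z) : ℝ≥0∞ :=
  ⨆ (B : Set Z) (_ : MeasurableSet B ∧ B ⊆ A), ENNReal.ofReal ‖μ B‖

lemma le_opBound {A B : Set Z} (h1 : MeasurableSet B) (h2 : B ⊆ A) :
    ENNReal.ofReal ‖μ B‖ ≤ opBound μ A :=
  le_iSup_of_le B (le_iSup_of_le ⟨h1, h2⟩ le_rfl)

lemma opBound_le {A : Set Z} {c : ℝ≥0∞}
    (h : ∀ B : Set Z, MeasurableSet B → B ⊆ A → ENNReal.ofReal ‖μ B‖ ≤ c) :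
    opBound μ A ≤ c :=
  iSup_le fun B => iSup_le fun hB => h B hB.1 hB.2

lemma opBound_witness {A : Set Z} (h : opBound μ A = ⊤) (c : ℝ) :
    ∃ B : Set Z, MeasurableSet B ∧ B ⊆ A ∧ c < ‖μ B‖ := by
  by_contra hno
  push_neg at hno
  have : opBound μ A ≤ ENNReal.ofReal (max c 0) :=
    opBound_le fun B hB hBA =>
      ENNReal.ofReal_le_ofReal ((hno B hB hBA).trans (le_max_left _ _))
  rw [h] at this
  exact absurd this (by simp)

lemma exists_unit_lt {T : E →L[ℝ] F} {c : ℝ} (hc : 0 ≤ c) (h : c < ‖T‖) :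
    ∃ x : E, ‖x‖ ≤ 1 ∧ c < ‖T x‖ := by
  by_contra hno
  push_neg at hno
  refine absurd h (not_lt.mpr (T.opNorm_le_bound hc fun x => ?_))
  rcases eq_or_ne x 0 with rfl | hx
  · simp
  · have h1 : ‖(‖x‖⁻¹ • x)‖ ≤ 1 := by
      rw [norm_smul, norm_inv, norm_norm, inv_mul_cancel₀ (norm_ne_zero_iff.mpr hx)]
    have h2 := hno _ h1
    rw [map_smul, norm_smul, norm_inv, norm_norm] at h2
    have hxn : ‖x‖ ≠ 0 := norm_ne_zero_iff.mpr hx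
    calc ‖T x‖ = ‖x‖ * (‖x‖⁻¹ * ‖T x‖) := by
          rw [← mul_assoc, mul_inv_cancel₀ hxn, one_mul]
      _ ≤ ‖x‖ * c := mul_le_mul_of_nonneg_left h2 (norm_nonneg x)
      _ = c * ‖x‖ := mul_comm _ _

lemma exists_opnorm_bound (hμ : IsIMeasure μ) :
    ∃ K : ℝ, 0 ≤ K ∧ ∀ B : Set Z, MeasurableSet B → ‖μ B‖ ≤ K := by
  by_cases htop : opBound μ (Set.univ : Set Z) = ⊤
  case neg =>
    refine ⟨(opBound μ (Set.univ : Set Z)).toReal, ENNReal.toReal_nonneg, fun B hB => ?_⟩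
    exact (ENNReal.ofReal_le_iff_le_toReal htop).mp (le_opBound hB (Set.subset_univ B))
  case pos =>
    exfalso
    have hdich : ∀ A : Set Z, MeasurableSet A → opBound μ A = ⊤ →
        ∃ (B : Set Z) (x : E), MeasurableSet B ∧ B ⊆ A ∧ ‖x‖ ≤ 1 ∧ 1 ≤ ‖μ B x‖ ∧
          opBound μ (A \ B) = ⊤ := by
      intro A hA htopA
      obtain ⟨B', hB'm, hB'A, hgt⟩ := opBound_witness htopA (1 + ‖μ A‖ + 1)
      obtain ⟨x, hx1, hxgt⟩ := exists_unit_lt (by positivity) hgt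
      have hAx : ‖μ A x‖ ≤ ‖μ A‖ := by
        calc ‖μ A x‖ ≤ ‖μ A‖ * ‖x‖ := (μ A).le_opNorm x
          _ ≤ ‖μ A‖ * 1 := mul_le_mul_of_nonneg_left hx1 (norm_nonneg _)
          _ = ‖μ A‖ := mul_one _
      have hdiffx : 1 ≤ ‖μ (A \ B') x‖ := by
        have hsplit : μ A x = μ (A \ B') x + μ B' x := by
          rw [← map_union hμ (hA.diff hB'm) hB'm disjoint_sdiff_self_left x,
            Set.diff_union_of_subset hB'A]
        have : μ (A \ B') x = μ A x - μ B' x := by rw [hsplit]; abel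
        rw [this]
        calc (1 : ℝ) = (1 + ‖μ A‖ + 1) - ‖μ A‖ - 1 := by ring
          _ ≤ ‖μ B' x‖ - ‖μ A x‖ - 1 := by
              have := hxgt.le
              linarith
          _ ≤ ‖μ A x - μ B' x‖ := by
              have := norm_sub_norm_le (μ A x) (μ B' x)
              have h2 := norm_sub_rev (μ A x) (μ B' x)
              have h3 := norm_sub_norm_le (μ B' x) (μ A x)
              rw [← h2] at h3
              linarith
      have hsplitB : opBound μ A ≤ opBound μ B' + opBound μ (A \ B') := by
        refine opBound_le fun B'' hB'' hB''A => ?_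
        have hop : ‖μ B''‖ ≤ ‖μ (B'' ∩ B')‖ + ‖μ (B'' \ B')‖ := by
          refine (μ B'').opNorm_le_bound (by positivity) fun z => ?_
          have : μ B'' z = μ (B'' ∩ B') z + μ (B'' \ B') z := by
            rw [← map_union hμ (hB''.inter hB'm) (hB''.diff hB'm)
              (disjoint_sdiff_self_right.mono_left Set.inter_subset_right) z,
              Set.inter_union_diff]
          rw [this]
          calc ‖μ (B'' ∩ B') z + μ (B'' \ B') z‖
              ≤ ‖μ (B'' ∩ B') z‖ + ‖μ (B'' \ B') z‖ := norm_add_le _ _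
            _ ≤ ‖μ (B'' ∩ B')‖ * ‖z‖ + ‖μ (B'' \ B')‖ * ‖z‖ :=
                add_le_add ((μ _).le_opNorm z) ((μ _).le_opNorm z)
            _ = (‖μ (B'' ∩ B')‖ + ‖μ (B'' \ B')‖) * ‖z‖ := by ring
        calc ENNReal.ofReal ‖μ B''‖
            ≤ ENNReal.ofReal (‖μ (B'' ∩ B')‖ + ‖μ (B'' \ B')‖) := ENNReal.ofReal_le_ofReal hop
          _ ≤ ENNReal.ofReal ‖μ (B'' ∩ B')‖ + ENNReal.ofReal ‖μ (B'' \ B')‖ :=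
              ENNReal.ofReal_add_le
          _ ≤ opBound μ B' + opBound μ (A \ B') := by
              refine add_le_add (le_opBound (hB''.inter hB'm) Set.inter_subset_right) ?_
              exact le_opBound (hB''.diff hB'm) (fun z hz => ⟨hB''A hz.1, hz.2⟩)
      have h2 : opBound μ B' + opBound μ (A \ B') = ⊤ :=
        top_le_iff.mp (htopA ▸ hsplitB)
      rcases ENNReal.add_eq_top.mp h2 with h | h
      · refine ⟨A \ B', x, hA.diff hB'm, Set.diff_subset, hx1, hdiffx, ?_⟩
        rwa [Set.diff_diff_cancel_left hB'A]
      · exact ⟨B', x, hB'm, hB'A, hx1,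
          le_trans (by linarith [norm_nonneg (μ A)]) hxgt.le, h⟩
    choose! Bf xf hm hsub hx1 hbig hrem using hdich
    set Aseq : ℕ → Set Z := fun k => Nat.rec Set.univ (fun _ Ak => Ak \ Bf Ak) k with hAseq
    have hAstep : ∀ k, Aseq (k + 1) = Aseq k \ Bf (Aseq k) := fun k => rfl
    have hinv : ∀ k, MeasurableSet (Aseq k) ∧ opBound μ (Aseq k) = ⊤ := by
      intro k
      induction k with
      | zero => exact ⟨MeasurableSet.univ, htop⟩
      | succ k ih =>
        obtain ⟨h1, h2⟩ := ih
        exact ⟨h1.diff (hm _ h1 h2), by rw [hAstep]; exact hrem _ h1 h2⟩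
    set D : ℕ → Set Z := fun k => Bf (Aseq k) with hD
    have hDm : ∀ k, MeasurableSet (D k) := fun k => hm _ (hinv k).1 (hinv k).2
    have hDsub : ∀ k, D k ⊆ Aseq k := fun k => hsub _ (hinv k).1 (hinv k).2
    have hAmono : ∀ j k, j ≤ k → Aseq k ⊆ Aseq j := by
      intro j k hjk
      induction k with
      | zero => rw [Nat.le_zero.mp hjk]
      | succ k ih =>
        rcases Nat.lt_or_ge j (k + 1) with h | h
        · exact (Set.diff_subset).trans (ih (by omega))
        · rw [Nat.le_antisymm hjk h]
    have hDdisj : Pairwise (Function.onFun Disjoint D) := by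
      have key : ∀ j k, j < k → Disjoint (D j) (D k) := by
        intro j k hjk
        have h1 : D k ⊆ Aseq j \ D j := (hDsub k).trans
          ((hAmono (j + 1) k hjk).trans (by rw [hAstep]))
        exact (disjoint_sdiff_self_right.mono_right h1)
      intro j k hjk
      rcases lt_or_gt_of_ne hjk with h | h
      · exact key j k h
      · exact (key k j h).symm
    have hsumm := indep_summable hμ hDm hDdisj
      (x := fun k => xf (Aseq k)) ⟨1, fun k => hx1 _ (hinv k).1 (hinv k).2⟩
    have h0 := hsumm.tendsto_atTop_zero
    have hev : ∀ᶠ k in atTop, ‖μ (D k) (xf (Aseq k))‖ < 1 :=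
      h0.norm.eventually (gt_mem_nhds (by simpa using one_pos))
    obtain ⟨k, hk⟩ := hev.exists
    exact absurd (hbig _ (hinv k).1 (hinv k).2) (not_le.mpr hk)

end OpBound
section Finiteness

set_option linter.unusedSectionVars false

variable {Z E F : Type*} [MeasurableSpace Z]
    [NormedAddCommGroup E] [NormedSpace ℝ E]
    [NormedAddCommGroup F] [NormedSpace ℝ F] [CompleteSpace F]
    {μ : Set Z → E →L[ℝ] F}

lemma semivar_univ_ne_top (hμ : IsIMeasure μ) : semivar μ (Set.univ : Set Z) ≠ ⊤ := by
  classical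
  obtain ⟨K, hK0, hK⟩ := exists_opnorm_bound hμ
  intro htop
  have hdich : ∀ A : Set Z, MeasurableSet A → semivar μ A = ⊤ →
      ∃ (N : ℕ) (B : ℕ → Set Z) (x : ℕ → E),
        (∀ n, MeasurableSet (B n)) ∧ (∀ n, B n ⊆ A) ∧
        Pairwise (Function.onFun Disjoint B) ∧ (∀ n, ‖x n‖ ≤ 1) ∧
        (∀ n, N ≤ n → B n = ∅) ∧
        1 ≤ ‖∑ n ∈ Finset.range N, μ (B n) (x n)‖ ∧
        semivar μ (A \ ⋃ n, B n) = ⊤ := by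
    intro A hA htopA
    obtain ⟨N, B, x, hBm, hBA, hBd, hx1, hknorm⟩ := semivar_top_witness htopA (2 + K + 1)
    -- restrict the family to an index finset J
    set BJ : Finset ℕ → ℕ → Set Z := fun J n => if n ∈ J ∧ n < N then B n else ∅ with hBJ
    set xJ : Finset ℕ → ℕ → E := fun J n => if n ∈ J ∧ n < N then x n else 0 with hxJ
    have hsumJ : ∀ J : Finset ℕ, J ⊆ Finset.range N →
        ∑ n ∈ Finset.range N, μ (BJ J n) (xJ J n) = ∑ n ∈ J, μ (B n) (x n) := by
      intro J hJ
      rw [← Finset.sum_subset hJ ?_]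
      · refine Finset.sum_congr rfl fun n hn => ?_
        have hn' : n ∈ J ∧ n < N := ⟨hn, Finset.mem_range.mp (hJ hn)⟩
        rw [hBJ, hxJ]; dsimp only; rw [if_pos hn', if_pos hn']
      · intro n hn hnJ
        have : ¬(n ∈ J ∧ n < N) := fun h => hnJ h.1
        rw [hBJ, hxJ]; dsimp only; rw [if_neg this, if_neg this, map_zero]
    have hBJm : ∀ J n, MeasurableSet (BJ J n) := by
      intro J n; rw [hBJ]; dsimp only; split_ifs
      · exact hBm n
      · exact MeasurableSet.empty
    have hBJA : ∀ J n, BJ J n ⊆ A := by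
      intro J n; rw [hBJ]; dsimp only; split_ifs
      · exact hBA n
      · exact Set.empty_subset _
    have hBJd : ∀ J, Pairwise (Function.onFun Disjoint (BJ J)) := by
      intro J i j hij
      simp only [Function.onFun, hBJ]
      split_ifs
      · exact hBd hij
      · exact Set.disjoint_empty _
      · exact Set.empty_disjoint _
      · exact Set.disjoint_empty _
    have hxJ1 : ∀ J n, ‖xJ J n‖ ≤ 1 := by
      intro J n; rw [hxJ]; dsimp only; split_ifs
      · exact hx1 n
      · simp
    have hBJemp : ∀ J n, N ≤ n → BJ J n = ∅ := by
      intro J n hn; rw [hBJ]; dsimp only; rw [if_neg (by omega)]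
    have hUJ : ∀ J : Finset ℕ, (⋃ n, BJ J n) = ⋃ n ∈ J.filter (· < N), B n := by
      intro J
      ext z
      simp only [Set.mem_iUnion, Finset.mem_filter]
      constructor
      · rintro ⟨n, hz⟩
        rw [hBJ] at hz; dsimp only at hz
        by_cases h : n ∈ J ∧ n < N
        · rw [if_pos h] at hz; exact ⟨n, ⟨h.1, h.2⟩, hz⟩
        · rw [if_neg h] at hz; exact absurd hz (Set.notMem_empty z)
      · rintro ⟨n, ⟨h1, h2⟩, hz⟩
        exact ⟨n, by rw [hBJ]; dsimp only; rw [if_pos ⟨h1, h2⟩]; exact hz⟩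
    have hBJmem : ∀ (J : Finset ℕ) (n : ℕ) (z : Z), z ∈ BJ J n ↔ (n ∈ J ∧ n < N) ∧ z ∈ B n := by
      intro J n z
      rw [hBJ]
      dsimp only
      split_ifs with h
      · simp [h]
      · simp [h]
    -- find a minimal-cardinality subfamily with norm ≥ 1
    set SS : Finset (Finset ℕ) := (Finset.range N).powerset.filter
      (fun I => 1 ≤ ‖∑ n ∈ I, μ (B n) (x n)‖) with hSS
    have hrangeSS : Finset.range N ∈ SS := by
      rw [hSS, Finset.mem_filter, Finset.mem_powerset]
      exact ⟨le_refl _, le_trans (by linarith) hknorm.le⟩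
    obtain ⟨I, hISS, hImin⟩ := Finset.exists_min_image SS Finset.card ⟨_, hrangeSS⟩
    rw [hSS, Finset.mem_filter, Finset.mem_powerset] at hISS
    obtain ⟨hIsub, hInorm⟩ := hISS
    -- I is nonempty, and its sum is at most K + 1
    have hInonempty : I.Nonempty := by
      rcases Finset.eq_empty_or_nonempty I with rfl | h
      · exfalso; simp at hInorm; linarith
      · exact h
    obtain ⟨j, hj⟩ := hInonempty
    have hIbound : ‖∑ n ∈ I, μ (B n) (x n)‖ ≤ K + 1 := by
      have herase : ¬(1 ≤ ‖∑ n ∈ I.erase j, μ (B n) (x n)‖) := by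
        intro hcon
        have hmem : I.erase j ∈ SS := by
          rw [hSS, Finset.mem_filter, Finset.mem_powerset]
          exact ⟨(Finset.erase_subset j I).trans hIsub, hcon⟩
        have := hImin _ hmem
        have hcard := Finset.card_erase_lt_of_mem hj
        omega
      push_neg at herase
      have hterm : ‖μ (B j) (x j)‖ ≤ K := by
        calc ‖μ (B j) (x j)‖ ≤ ‖μ (B j)‖ * ‖x j‖ := (μ (B j)).le_opNorm _
          _ ≤ K * 1 := mul_le_mul (hK _ (hBm j)) (hx1 j) (norm_nonneg _) hK0
          _ = K := mul_one K
      calc ‖∑ n ∈ I, μ (B n) (x n)‖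
          = ‖μ (B j) (x j) + ∑ n ∈ I.erase j, μ (B n) (x n)‖ :=
            congrArg norm (Finset.add_sum_erase I (fun n => μ (B n) (x n)) hj).symm
        _ ≤ ‖μ (B j) (x j)‖ + ‖∑ n ∈ I.erase j, μ (B n) (x n)‖ := norm_add_le _ _
        _ ≤ K + 1 := add_le_add hterm herase.le
    have hIc : 1 ≤ ‖∑ n ∈ Finset.range N \ I, μ (B n) (x n)‖ := by
      have hsplit : ∑ n ∈ Finset.range N \ I, μ (B n) (x n)
          = (∑ n ∈ Finset.range N, μ (B n) (x n)) - ∑ n ∈ I, μ (B n) (x n) :=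
        Finset.sum_sdiff_eq_sub hIsub
      rw [hsplit]
      have := norm_sub_norm_le (∑ n ∈ Finset.range N, μ (B n) (x n)) (∑ n ∈ I, μ (B n) (x n))
      linarith [hknorm.le]
    -- three-way split
    have hUsub : A ⊆ (⋃ n, BJ I n) ∪ (A \ ⋃ n, BJ I n) := by
      intro z hz
      by_cases h : z ∈ ⋃ n, BJ I n
      · exact Or.inl h
      · exact Or.inr ⟨hz, h⟩
    have hmeasU : ∀ J : Finset ℕ, MeasurableSet (⋃ n, BJ J n) :=
      fun J => MeasurableSet.iUnion (hBJm J)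
    have h3 : semivar μ A ≤ semivar μ (⋃ n, BJ I n) +
        (semivar μ (⋃ n, BJ (Finset.range N \ I) n) +
          semivar μ ((A \ ⋃ n, BJ I n) \ ⋃ n, BJ (Finset.range N \ I) n)) := by
      refine le_trans (semivar_union_le hμ (hmeasU I) hUsub) ?_
      refine add_le_add_right ?_ _
      refine semivar_union_le hμ (hmeasU _) ?_
      intro z hz
      by_cases h : z ∈ ⋃ n, BJ (Finset.range N \ I) n
      · exact Or.inl h
      · exact Or.inr ⟨hz, h⟩
    rw [htopA] at h3
    have h4 := top_le_iff.mp h3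
    -- disjointness of the two unions
    have hUdisj : Disjoint (⋃ n, BJ I n) (⋃ n, BJ (Finset.range N \ I) n) := by
      rw [Set.disjoint_iUnion_left]
      intro i
      rw [Set.disjoint_iUnion_right]
      intro j
      rw [hBJ]
      dsimp only
      split_ifs with h1 h2
      · refine hBd (fun hij => ?_)
        rw [hij] at h1
        exact (Finset.mem_sdiff.mp h2.1).2 h1.1
      · exact Set.disjoint_empty _
      · exact Set.empty_disjoint _
      · exact Set.empty_disjoint _
    rcases ENNReal.add_eq_top.mp h4 with h | h
    · -- semivar (⋃ BJ I) = ⊤ : output the complementary family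
      refine ⟨N, BJ (Finset.range N \ I), xJ (Finset.range N \ I), hBJm _, hBJA _, hBJd _,
        hxJ1 _, hBJemp _, ?_, ?_⟩
      · rw [hsumJ _ (Finset.sdiff_subset)]; exact hIc
      · rw [← top_le_iff, ← h]
        refine semivar_mono ?_
        intro z hz
        obtain ⟨n, hn⟩ := Set.mem_iUnion.mp hz
        obtain ⟨hcond, hzB⟩ := (hBJmem I n z).mp hn
        refine (Set.mem_diff _).mpr ⟨hBA n hzB, ?_⟩
        exact fun hmem => Set.disjoint_left.mp hUdisj hz hmem
    rcases ENNReal.add_eq_top.mp h with h' | h'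
    · -- semivar (⋃ BJ Iᶜ) = ⊤ : output the I family
      refine ⟨N, BJ I, xJ I, hBJm _, hBJA _, hBJd _, hxJ1 _, hBJemp _, ?_, ?_⟩
      · rw [hsumJ _ hIsub]; exact hInorm
      · rw [← top_le_iff, ← h']
        refine semivar_mono ?_
        intro z hz
        obtain ⟨n, hn⟩ := Set.mem_iUnion.mp hz
        obtain ⟨hcond, hzB⟩ := (hBJmem _ n z).mp hn
        refine (Set.mem_diff _).mpr ⟨hBA n hzB, ?_⟩
        exact fun hmem => Set.disjoint_right.mp hUdisj hz hmem
    · -- remainder has infinite semivariation : output the full family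
      refine ⟨N, BJ (Finset.range N), xJ (Finset.range N), hBJm _, hBJA _, hBJd _,
        hxJ1 _, hBJemp _, ?_, ?_⟩
      · rw [hsumJ _ le_rfl]; exact le_trans (by linarith) hknorm.le
      · rw [← top_le_iff, ← h']
        refine semivar_mono ?_
        intro z hz
        simp only [Set.mem_diff] at hz
        obtain ⟨⟨hzA, hzI⟩, hzIc⟩ := hz
        refine (Set.mem_diff _).mpr ⟨hzA, fun hmem => ?_⟩
        obtain ⟨n, hn⟩ := Set.mem_iUnion.mp hmem
        obtain ⟨⟨_, hnN⟩, hzB⟩ := (hBJmem _ n z).mp hn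
        by_cases hnI : n ∈ I
        · exact hzI (Set.mem_iUnion.mpr ⟨n, (hBJmem I n z).mpr ⟨⟨hnI, hnN⟩, hzB⟩⟩)
        · refine hzIc (Set.mem_iUnion.mpr ⟨n, (hBJmem _ n z).mpr ⟨⟨?_, hnN⟩, hzB⟩⟩)
          exact Finset.mem_sdiff.mpr ⟨Finset.mem_range.mpr hnN, hnI⟩
  -- recursion
  choose! Nf Bf xf hm hsubA hp hxb hemp hnorm hrem using hdich
  set Aseq : ℕ → Set Z := fun k => Nat.rec Set.univ (fun _ Ak => Ak \ ⋃ n, Bf Ak n) k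
    with hAseqdef
  have hAstep : ∀ k, Aseq (k + 1) = Aseq k \ ⋃ n, Bf (Aseq k) n := fun k => rfl
  have hinv : ∀ k, MeasurableSet (Aseq k) ∧ semivar μ (Aseq k) = ⊤ := by
    intro k
    induction k with
    | zero => exact ⟨MeasurableSet.univ, htop⟩
    | succ k ih =>
      obtain ⟨h1, h2⟩ := ih
      refine ⟨h1.diff (MeasurableSet.iUnion (hm _ h1 h2)), ?_⟩
      rw [hAstep]
      exact hrem _ h1 h2
  set D : ℕ → ℕ → Set Z := fun k i => Bf (Aseq k) i with hDdef
  set v : ℕ → ℕ → E := fun k i => xf (Aseq k) i with hvdef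
  have hDm : ∀ k i, MeasurableSet (D k i) := fun k i => hm _ (hinv k).1 (hinv k).2 i
  have hDsub : ∀ k i, D k i ⊆ Aseq k := fun k i => hsubA _ (hinv k).1 (hinv k).2 i
  have hAmono : ∀ j k, j ≤ k → Aseq k ⊆ Aseq j := by
    intro j k hjk
    induction k with
    | zero => rw [Nat.le_zero.mp hjk]
    | succ k ih =>
      rcases Nat.lt_or_ge j (k + 1) with h | h
      · exact (Set.diff_subset).trans (ih (by omega))
      · rw [Nat.le_antisymm hjk h]
  have hDdisj : ∀ p q : ℕ × ℕ, p ≠ q → Disjoint (D p.1 p.2) (D q.1 q.2) := by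
    have key : ∀ k l i i', k < l → Disjoint (D k i) (D l i') := by
      intro k l i i' hkl
      have h1 : D l i' ⊆ Aseq k \ ⋃ n, D k n := (hDsub l i').trans
        ((hAmono (k + 1) l hkl).trans (by rw [hAstep]))
      refine (disjoint_sdiff_self_right.mono_right h1).mono_left ?_
      exact Set.subset_iUnion (fun n => D k n) i
    rintro ⟨k, i⟩ ⟨l, i'⟩ hne
    rcases lt_trichotomy k l with h | rfl | h
    · exact key k l i i' h
    · have : i ≠ i' := fun h => hne (by rw [h])
      exact hp _ (hinv k).1 (hinv k).2 this
    · exact (key l k i' i h).symm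
  have hbig : ∀ k, 1 ≤ ‖∑' i, μ (D k i) (v k i)‖ := by
    intro k
    rw [tsum_eq_sum (s := Finset.range (Nf (Aseq k))) ?_]
    · exact hnorm _ (hinv k).1 (hinv k).2
    · intro i hi
      rw [Finset.mem_range, not_lt] at hi
      have hDi : D k i = ∅ := by
        rw [hDdef]
        exact hemp _ (hinv k).1 (hinv k).2 i hi
      rw [hDi, map_empty hμ]
  exact blocks_false hμ hDm hDdisj (fun k i => hxb _ (hinv k).1 (hinv k).2 i)
    one_pos hbig

end Finiteness
section Tail

set_option linter.unusedSectionVars false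

variable {Z E F : Type*} [MeasurableSpace Z]
    [NormedAddCommGroup E] [NormedSpace ℝ E]
    [NormedAddCommGroup F] [NormedSpace ℝ F] [CompleteSpace F]
    {μ : Set Z → E →L[ℝ] F}

/-- Tails of unions of disjoint measurable sets have arbitrarily small semivariation. -/
lemma tail_semivar_small (hμ : IsIMeasure μ) {R : ℕ → Set Z} (hRm : ∀ m, MeasurableSet (R m))
    (hRd : Pairwise (Function.onFun Disjoint R)) {ε : ℝ} (hε : 0 < ε) :
    ∃ N : ℕ, semivar μ (⋃ j, R (N + j)) ≤ ENNReal.ofReal ε := by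
  classical
  by_contra hno
  push_neg at hno
  have step : ∀ N : ℕ, ∃ (J : ℕ) (B : ℕ → Set Z) (x : ℕ → E) (n₁ : ℕ),
      1 ≤ J ∧ (∀ i, MeasurableSet (B i)) ∧
      (∀ i, B i ⊆ ⋃ j ∈ Finset.range J, R (N + j)) ∧
      Pairwise (Function.onFun Disjoint B) ∧ (∀ i, ‖x i‖ ≤ 1) ∧
      (∀ i, n₁ ≤ i → B i = ∅ ∧ x i = 0) ∧
      ε / 2 ≤ ‖∑ i ∈ Finset.range n₁, μ (B i) (x i)‖ := by
    intro N
    obtain ⟨n₁, B₀, x₀, hBm, hBsub, hBd, hx1, hgt⟩ := semivar_witness hε.le (hno N)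
    have hfib : ∀ i, HasSum (fun j => μ (B₀ i ∩ R (N + j)) (x₀ i)) (μ (B₀ i) (x₀ i)) := by
      intro i
      have hpd : Pairwise (Function.onFun Disjoint (fun j => B₀ i ∩ R (N + j))) := by
        intro j j' hjj
        exact (hRd (show N + j ≠ N + j' by omega)).mono
          Set.inter_subset_right Set.inter_subset_right
      have h := hasSum_meas hμ (fun j => (hBm i).inter (hRm (N + j))) hpd (x₀ i)
      have hu : (⋃ j, B₀ i ∩ R (N + j)) = B₀ i := by
        rw [← Set.inter_iUnion]
        exact Set.inter_eq_self_of_subset_left (hBsub i)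
      rwa [hu] at h
    have htend : Tendsto
        (fun J => ∑ i ∈ Finset.range n₁, ∑ j ∈ Finset.range J, μ (B₀ i ∩ R (N + j)) (x₀ i))
        atTop (𝓝 (∑ i ∈ Finset.range n₁, μ (B₀ i) (x₀ i))) :=
      tendsto_finset_sum _ (fun i _ => (hfib i).tendsto_sum_nat)
    have hev : ∀ᶠ J in atTop, ε / 2 <
        ‖∑ i ∈ Finset.range n₁, ∑ j ∈ Finset.range J, μ (B₀ i ∩ R (N + j)) (x₀ i)‖ :=
      htend.norm.eventually (lt_mem_nhds (lt_of_lt_of_le (by linarith) hgt.le))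
    obtain ⟨J₀, hJ₀⟩ := eventually_atTop.mp hev
    set J := max J₀ 1 with hJdef
    have hJval := hJ₀ J (le_max_left _ _)
    set V : Set Z := ⋃ j ∈ Finset.range J, R (N + j) with hV
    have hVm : MeasurableSet V :=
      (Finset.range J).measurableSet_biUnion (fun j _ => hRm (N + j))
    refine ⟨J, fun i => if i < n₁ then B₀ i ∩ V else ∅,
      fun i => if i < n₁ then x₀ i else 0, n₁, le_max_right _ _,
      ?_, ?_, ?_, ?_, ?_, ?_⟩
    · intro i; dsimp only; split_ifs
      · exact (hBm i).inter hVm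
      · exact MeasurableSet.empty
    · intro i; dsimp only; split_ifs
      · exact Set.inter_subset_right
      · exact Set.empty_subset _
    · intro i i' hii
      simp only [Function.onFun]
      split_ifs
      · exact (hBd hii).mono Set.inter_subset_left Set.inter_subset_left
      · exact Set.disjoint_empty _
      · exact Set.empty_disjoint _
      · exact Set.disjoint_empty _
    · intro i; dsimp only; split_ifs
      · exact hx1 i
      · simp
    · intro i hi
      dsimp only
      rw [if_neg (by omega), if_neg (by omega)]
      exact ⟨rfl, rfl⟩
    · have hterm : ∀ i ∈ Finset.range n₁,
          μ (if i < n₁ then B₀ i ∩ V else ∅) (if i < n₁ then x₀ i else 0)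
            = ∑ j ∈ Finset.range J, μ (B₀ i ∩ R (N + j)) (x₀ i) := by
        intro i hi
        have hi' : i < n₁ := Finset.mem_range.mp hi
        rw [if_pos hi', if_pos hi']
        have hBV : B₀ i ∩ V = ⋃ j ∈ Finset.range J, (B₀ i ∩ R (N + j)) := by
          rw [hV, Set.inter_iUnion₂]
        have hpd : Pairwise (Function.onFun Disjoint (fun j => B₀ i ∩ R (N + j))) := by
          intro j j' hjj
          exact (hRd (show N + j ≠ N + j' by omega)).mono
            Set.inter_subset_right Set.inter_subset_right
        rw [hBV, map_biUnion hμ (fun j => (hBm i).inter (hRm (N + j))) hpd (x₀ i) J]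
      rw [Finset.sum_congr rfl hterm]
      exact hJval.le
  choose Jf Bf xf nf hJ1 hm hsub hp hxb hemp hnorm using step
  set Nk : ℕ → ℕ := fun k => Nat.rec 0 (fun _ Nk => Nk + Jf Nk) k with hNkdef
  have hNstep : ∀ k, Nk (k + 1) = Nk k + Jf (Nk k) := fun k => rfl
  have hNmono : StrictMono Nk := strictMono_nat_of_lt_succ (fun k => by
    have h1 := hJ1 (Nk k); have h2 := hNstep k; omega)
  set D : ℕ → ℕ → Set Z := fun k i => Bf (Nk k) i with hDdef
  set v : ℕ → ℕ → E := fun k i => xf (Nk k) i with hvdef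
  have hDm : ∀ k i, MeasurableSet (D k i) := fun k i => hm (Nk k) i
  have hDsubV : ∀ k i, D k i ⊆ ⋃ j ∈ Finset.range (Jf (Nk k)), R (Nk k + j) :=
    fun k i => hsub (Nk k) i
  have hDdisj : ∀ p q : ℕ × ℕ, p ≠ q → Disjoint (D p.1 p.2) (D q.1 q.2) := by
    have key : ∀ k l i i', k < l → Disjoint (D k i) (D l i') := by
      intro k l i i' hkl
      rw [Set.disjoint_left]
      intro z hz hz'
      obtain ⟨j, hj, hzj⟩ := Set.mem_iUnion₂.mp (hDsubV k i hz)
      obtain ⟨j', hj', hzj'⟩ := Set.mem_iUnion₂.mp (hDsubV l i' hz')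
      rw [Finset.mem_range] at hj hj'
      have hne : Nk k + j ≠ Nk l + j' := by
        have h1 : Nk k + j < Nk (k + 1) := by rw [hNstep]; omega
        have h2 : Nk (k + 1) ≤ Nk l := hNmono.le_iff_le.mpr hkl
        omega
      exact Set.disjoint_left.mp (hRd hne) hzj hzj'
    rintro ⟨k, i⟩ ⟨l, i'⟩ hne
    rcases lt_trichotomy k l with h | rfl | h
    · exact key k l i i' h
    · have : i ≠ i' := fun h => hne (by rw [h])
      exact hp (Nk k) this
    · exact (key l k i' i h).symm
  have hbig : ∀ k, ε / 2 ≤ ‖∑' i, μ (D k i) (v k i)‖ := by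
    intro k
    rw [tsum_eq_sum (s := Finset.range (nf (Nk k))) ?_]
    · exact hnorm (Nk k)
    · intro i hi
      rw [Finset.mem_range, not_lt] at hi
      have h1 := hemp (Nk k) i hi
      have hDi : D k i = ∅ := by rw [hDdef]; exact h1.1
      rw [hDi, map_empty hμ]
  exact blocks_false hμ hDm hDdisj (fun k i => hxb (Nk k) i) (by linarith) hbig

end Tail
section Integral

set_option linter.unusedSectionVars false

variable {Z E F : Type*} [MeasurableSpace Z]
    [NormedAddCommGroup E] [NormedSpace ℝ E]
    [NormedAddCommGroup F] [NormedSpace ℝ F] [CompleteSpace F]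
    {μ : Set Z → E →L[ℝ] F}

lemma cv_hasSum (hμ : IsIMeasure μ) {h : Z → E} {Cb : ℝ} (hb : ∀ z, ‖h z‖ ≤ Cb)
    {e : ℕ → E} {A : ℕ → Set Z} (hAm : ∀ n, MeasurableSet (A n))
    (hAd : Pairwise (Function.onFun Disjoint A))
    (hval : ∀ n, ∀ z ∈ A n, h z = e n) {y : F}
    (hy : Tendsto (fun N => ∑ n ∈ Finset.range N, μ (A n) (e n)) atTop (𝓝 y)) :
    HasSum (fun n => μ (A n) (e n)) y := by
  classical
  have hsum : Summable (fun n => μ (A n) (e n)) := by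
    set e' : ℕ → E := fun n => if (A n).Nonempty then e n else 0 with he'
    have hkey : (fun n => μ (A n) (e n)) = fun n => μ (A n) (e' n) := by
      funext n
      rw [he']
      dsimp only
      split_ifs with hn
      · rfl
      · rw [Set.not_nonempty_iff_eq_empty] at hn
        rw [hn, map_empty hμ, map_empty hμ]
    have hb' : ∀ n, ‖e' n‖ ≤ max Cb 0 := by
      intro n
      rw [he']
      dsimp only
      split_ifs with hn
      · obtain ⟨z, hz⟩ := hn
        rw [← hval n z hz]
        exact (hb z).trans (le_max_left _ _)
      · simp
    rw [hkey]
    exact indep_summable hμ hAm hAd ⟨max Cb 0, hb'⟩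
  exact (tendsto_nhds_unique hsum.hasSum.tendsto_sum_nat hy) ▸ hsum.hasSum

lemma cv_comparison (hμ : IsIMeasure μ) (hfin : semivar μ (Set.univ : Set Z) ≠ ⊤)
    {h₁ h₂ : Z → E} {y₁ y₂ : F} {Cb δ c : ℝ}
    (hb1 : ∀ z, ‖h₁ z‖ ≤ Cb) (hb2 : ∀ z, ‖h₂ z‖ ≤ Cb)
    {S : Set Z} (hS : MeasurableSet S) (hδ : 0 < δ) (hc : 0 < c)
    (hnear : ∀ z ∉ S, ‖h₁ z - h₂ z‖ ≤ δ) (hfar : ∀ z, ‖h₁ z - h₂ z‖ ≤ c)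
    (hcv1 : HasCVIntegral μ h₁ y₁) (hcv2 : HasCVIntegral μ h₂ y₂) :
    ‖y₁ - y₂‖ ≤ c * (semivar μ S).toReal + δ * (semivar μ (Set.univ : Set Z)).toReal := by
  classical
  obtain ⟨e₁, A, hAm, hAd, hAU, hAval, hAt⟩ := hcv1
  obtain ⟨e₂, B, hBm, hBd, hBU, hBval, hBt⟩ := hcv2
  set P : ℕ × ℕ → Set Z := fun p => A p.1 ∩ B p.2 with hP
  have hPm : ∀ p : ℕ × ℕ, MeasurableSet (P p) := fun p => (hAm p.1).inter (hBm p.2)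
  have hPd : ∀ p q : ℕ × ℕ, p ≠ q → Disjoint (P p) (P q) := by
    intro p q hpq
    rcases eq_or_ne p.1 q.1 with h1 | h1
    · have h2 : p.2 ≠ q.2 := fun h2 => hpq (Prod.ext h1 h2)
      exact (hBd h2).mono Set.inter_subset_right Set.inter_subset_right
    · exact (hAd h1).mono Set.inter_subset_left Set.inter_subset_left
  set ee : ℕ ≃ ℕ × ℕ := (Denumerable.eqv (ℕ × ℕ)).symm with hee
  have hq1sum : Summable (fun p : ℕ × ℕ => μ (P p) (e₁ p.1)) := by
    set e' : ℕ → E := fun n => if (A n).Nonempty then e₁ n else 0 with he'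
    have hkey : (fun p : ℕ × ℕ => μ (P p) (e₁ p.1)) = fun p => μ (P p) (e' p.1) := by
      funext p
      rw [he']; dsimp only
      split_ifs with hn
      · rfl
      · rw [Set.not_nonempty_iff_eq_empty] at hn
        have hPe : P p = ∅ := by rw [hP]; dsimp only; rw [hn, Set.empty_inter]
        rw [hPe, map_empty hμ, map_empty hμ]
    have hb' : ∀ n, ‖e' n‖ ≤ max Cb 0 := by
      intro n; rw [he']; dsimp only
      split_ifs with hn
      · obtain ⟨z, hz⟩ := hn
        rw [← hAval n z hz]; exact (hb1 z).trans (le_max_left _ _)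
      · simp
    rw [hkey]
    refine (Equiv.summable_iff ee).mp ?_
    exact indep_summable hμ (fun n => hPm _)
      (fun n m hnm => hPd _ _ (fun h => hnm (ee.injective h))) ⟨max Cb 0, fun n => hb' _⟩
  have hq1fib : ∀ n, HasSum (fun m => μ (P (n, m)) (e₁ n)) (μ (A n) (e₁ n)) := by
    intro n
    have hpd : Pairwise (Function.onFun Disjoint (fun m => P (n, m))) := by
      intro m m' hmm
      exact hPd _ _ (fun h => hmm (congrArg Prod.snd h))
    have h := hasSum_meas hμ (fun m => hPm (n, m)) hpd (e₁ n)
    have hu : (⋃ m, P (n, m)) = A n := by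
      rw [hP]; dsimp only
      rw [← Set.inter_iUnion, hBU, Set.inter_univ]
    rwa [hu] at h
  have hy1 : HasSum (fun n => μ (A n) (e₁ n)) y₁ := cv_hasSum hμ hb1 hAm hAd hAval hAt
  have hq1 : HasSum (fun p : ℕ × ℕ => μ (P p) (e₁ p.1)) y₁ := by
    have h1 : HasSum (fun n => μ (A n) (e₁ n)) (∑' p : ℕ × ℕ, μ (P p) (e₁ p.1)) :=
      hq1sum.hasSum.prod_fiberwise hq1fib
    exact (h1.unique hy1) ▸ hq1sum.hasSum
  set Q : ℕ × ℕ → Set Z := fun p => A p.2 ∩ B p.1 with hQ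
  have hQm : ∀ p : ℕ × ℕ, MeasurableSet (Q p) := fun p => (hAm p.2).inter (hBm p.1)
  have hQd : ∀ p q : ℕ × ℕ, p ≠ q → Disjoint (Q p) (Q q) := by
    intro p q hpq
    rcases eq_or_ne p.1 q.1 with h1 | h1
    · have h2 : p.2 ≠ q.2 := fun h2 => hpq (Prod.ext h1 h2)
      exact (hAd h2).mono Set.inter_subset_left Set.inter_subset_left
    · exact (hBd h1).mono Set.inter_subset_right Set.inter_subset_right
  have hq2sum : Summable (fun p : ℕ × ℕ => μ (Q p) (e₂ p.1)) := by
    set e' : ℕ → E := fun n => if (B n).Nonempty then e₂ n else 0 with he'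
    have hkey : (fun p : ℕ × ℕ => μ (Q p) (e₂ p.1)) = fun p => μ (Q p) (e' p.1) := by
      funext p
      rw [he']; dsimp only
      split_ifs with hn
      · rfl
      · rw [Set.not_nonempty_iff_eq_empty] at hn
        have hQe : Q p = ∅ := by rw [hQ]; dsimp only; rw [hn, Set.inter_empty]
        rw [hQe, map_empty hμ, map_empty hμ]
    have hb' : ∀ n, ‖e' n‖ ≤ max Cb 0 := by
      intro n; rw [he']; dsimp only
      split_ifs with hn
      · obtain ⟨z, hz⟩ := hn
        rw [← hBval n z hz]; exact (hb2 z).trans (le_max_left _ _)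
      · simp
    rw [hkey]
    refine (Equiv.summable_iff ee).mp ?_
    exact indep_summable hμ (fun n => hQm _)
      (fun n m hnm => hQd _ _ (fun h => hnm (ee.injective h))) ⟨max Cb 0, fun n => hb' _⟩
  have hq2fib : ∀ n, HasSum (fun m => μ (Q (n, m)) (e₂ n)) (μ (B n) (e₂ n)) := by
    intro n
    have hpd : Pairwise (Function.onFun Disjoint (fun m => Q (n, m))) := by
      intro m m' hmm
      exact hQd _ _ (fun h => hmm (congrArg Prod.snd h))
    have h := hasSum_meas hμ (fun m => hQm (n, m)) hpd (e₂ n)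
    have hu : (⋃ m, Q (n, m)) = B n := by
      rw [hQ]; dsimp only
      rw [← Set.iUnion_inter, hAU, Set.univ_inter]
    rwa [hu] at h
  have hy2 : HasSum (fun n => μ (B n) (e₂ n)) y₂ := cv_hasSum hμ hb2 hBm hBd hBval hBt
  have hq2s : HasSum (fun p : ℕ × ℕ => μ (Q p) (e₂ p.1)) y₂ := by
    have h1 : HasSum (fun n => μ (B n) (e₂ n)) (∑' p : ℕ × ℕ, μ (Q p) (e₂ p.1)) :=
      hq2sum.hasSum.prod_fiberwise hq2fib
    exact (h1.unique hy2) ▸ hq2sum.hasSum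
  have hq2 : HasSum (fun p : ℕ × ℕ => μ (P p) (e₂ p.2)) y₂ :=
    (Equiv.hasSum_iff (Equiv.prodComm ℕ ℕ)).mp hq2s
  set u : ℕ × ℕ → E := fun p => if (P p).Nonempty then e₁ p.1 - e₂ p.2 else 0 with hu
  have huval : ∀ p (z : Z), z ∈ P p → u p = h₁ z - h₂ z := by
    intro p z hz
    rw [hu]; dsimp only
    rw [if_pos ⟨z, hz⟩, hAval p.1 z hz.1, hBval p.2 z hz.2]
  set av : ℕ × ℕ → E := fun p => if (P p ∩ S).Nonempty then u p else 0 with hav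
  set bv : ℕ × ℕ → E := fun p => if (P p \ S).Nonempty then u p else 0 with hbv
  have hac : ∀ p, ‖av p‖ ≤ c := by
    intro p
    rw [hav]; dsimp only
    split_ifs with hps
    · obtain ⟨z, hz⟩ := hps
      rw [huval p z hz.1]
      exact hfar _
    · simpa using hc.le
  have hbδ : ∀ p, ‖bv p‖ ≤ δ := by
    intro p
    rw [hbv]; dsimp only
    split_ifs with hps
    · obtain ⟨z, hz⟩ := hps
      rw [huval p z hz.1]
      exact hnear z hz.2
    · simpa using hδ.le
  have hdisjPS : ∀ p : ℕ × ℕ, Disjoint (P p ∩ S) (P p \ S) :=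
    fun p => disjoint_sdiff_self_right.mono_left Set.inter_subset_right
  have hr : ∀ p : ℕ × ℕ, μ (P p) (e₁ p.1) - μ (P p) (e₂ p.2)
      = μ (P p ∩ S) (av p) + μ (P p \ S) (bv p) := by
    intro p
    by_cases hp : (P p).Nonempty
    · have hu_eq : u p = e₁ p.1 - e₂ p.2 := by rw [hu]; dsimp only; rw [if_pos hp]
      have h1 : μ (P p) (e₁ p.1) - μ (P p) (e₂ p.2) = μ (P p) (u p) := by
        rw [hu_eq, map_sub]
      have h2 : μ (P p) (u p) = μ (P p ∩ S) (u p) + μ (P p \ S) (u p) := by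
        rw [← map_union hμ ((hPm p).inter hS) ((hPm p).diff hS) (hdisjPS p) (u p),
          Set.inter_union_diff]
      have h3 : μ (P p ∩ S) (u p) = μ (P p ∩ S) (av p) := by
        by_cases hps : (P p ∩ S).Nonempty
        · rw [hav]; dsimp only; rw [if_pos hps]
        · rw [Set.not_nonempty_iff_eq_empty] at hps
          rw [hps, map_empty hμ, map_empty hμ]
      have h4 : μ (P p \ S) (u p) = μ (P p \ S) (bv p) := by
        by_cases hps : (P p \ S).Nonempty
        · rw [hbv]; dsimp only; rw [if_pos hps]
        · rw [Set.not_nonempty_iff_eq_empty] at hps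
          rw [hps, map_empty hμ, map_empty hμ]
      rw [h1, h2, h3, h4]
    · rw [Set.not_nonempty_iff_eq_empty] at hp
      rw [hp]
      simp only [Set.empty_inter, Set.empty_diff]
      rw [map_empty hμ, map_empty hμ, map_empty hμ, map_empty hμ]
      simp
  have hrsum : HasSum (fun p : ℕ × ℕ => μ (P p ∩ S) (av p) + μ (P p \ S) (bv p)) (y₁ - y₂) :=
    (funext hr : (fun p : ℕ × ℕ => μ (P p) (e₁ p.1) - μ (P p) (e₂ p.2))
      = fun p => μ (P p ∩ S) (av p) + μ (P p \ S) (bv p)) ▸ (hq1.sub hq2)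
  have hseq : HasSum ((fun p : ℕ × ℕ => μ (P p ∩ S) (av p) + μ (P p \ S) (bv p)) ∘ ee)
      (y₁ - y₂) := (Equiv.hasSum_iff ee).mpr hrsum
  have htend := hseq.tendsto_sum_nat
  have hbound : ∀ J : ℕ,
      ‖∑ j ∈ Finset.range J, (μ (P (ee j) ∩ S) (av (ee j)) + μ (P (ee j) \ S) (bv (ee j)))‖
        ≤ c * (semivar μ S).toReal + δ * (semivar μ (Set.univ : Set Z)).toReal := by
    intro J
    have hsplit : ∑ j ∈ Finset.range J,
        (μ (P (ee j) ∩ S) (av (ee j)) + μ (P (ee j) \ S) (bv (ee j)))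
      = (∑ j ∈ Finset.range J, μ (P (ee j) ∩ S) (av (ee j)))
        + ∑ j ∈ Finset.range J, μ (P (ee j) \ S) (bv (ee j)) := Finset.sum_add_distrib
    rw [hsplit]
    have h1 : ‖∑ j ∈ Finset.range J, μ (P (ee j) ∩ S) (av (ee j))‖
        ≤ c * (semivar μ S).toReal := by
      refine norm_sum_le_semivar hfin (fun j => (hPm _).inter hS)
        (fun j => Set.inter_subset_right) ?_ hc (fun j => hac _) J
      intro i j hij
      exact (hPd _ _ (fun h => hij (ee.injective h))).mono
        Set.inter_subset_left Set.inter_subset_left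
    have h2 : ‖∑ j ∈ Finset.range J, μ (P (ee j) \ S) (bv (ee j))‖
        ≤ δ * (semivar μ (Set.univ : Set Z)).toReal := by
      refine norm_sum_le_semivar hfin (fun j => (hPm _).diff hS)
        (fun j => Set.subset_univ _) ?_ hδ (fun j => hbδ _) J
      intro i j hij
      exact (hPd _ _ (fun h => hij (ee.injective h))).mono
        Set.diff_subset Set.diff_subset
    calc ‖(∑ j ∈ Finset.range J, μ (P (ee j) ∩ S) (av (ee j)))
          + ∑ j ∈ Finset.range J, μ (P (ee j) \ S) (bv (ee j))‖
        ≤ ‖∑ j ∈ Finset.range J, μ (P (ee j) ∩ S) (av (ee j))‖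
          + ‖∑ j ∈ Finset.range J, μ (P (ee j) \ S) (bv (ee j))‖ := norm_add_le _ _
      _ ≤ c * (semivar μ S).toReal + δ * (semivar μ (Set.univ : Set Z)).toReal :=
          add_le_add h1 h2
  exact le_of_tendsto htend.norm (Filter.Eventually.of_forall hbound)

lemma integral_comparison (hμ : IsIMeasure μ) (hfin : semivar μ (Set.univ : Set Z) ≠ ⊤)
    {h₁ h₂ : Z → E} {y₁ y₂ : F} {Cb δ : ℝ} (hCb : 0 ≤ Cb)
    (hb1 : ∀ z, ‖h₁ z‖ ≤ Cb) (hb2 : ∀ z, ‖h₂ z‖ ≤ Cb)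
    {S : Set Z} (hS : MeasurableSet S) (hδ : 0 < δ)
    (hnear : ∀ z ∉ S, ‖h₁ z - h₂ z‖ ≤ δ)
    (hi1 : HasIntegral μ h₁ y₁) (hi2 : HasIntegral μ h₂ y₂) :
    ‖y₁ - y₂‖ ≤ (2 * Cb + 2) * (semivar μ S).toReal
      + δ * (semivar μ (Set.univ : Set Z)).toReal := by
  obtain ⟨g₁, w₁, hcv1, happ1, hw1⟩ := hi1
  obtain ⟨g₂, w₂, hcv2, happ2, hw2⟩ := hi2
  have hfrac1 : ∀ k : ℕ, 1 / ((k:ℝ) + 1) ≤ 1 := by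
    intro k
    rw [div_le_one (by positivity)]
    simp
  have hk : ∀ k : ℕ, ‖w₁ k - w₂ k‖ ≤ (2 * Cb + 2) * (semivar μ S).toReal
      + (δ + 2 / ((k:ℝ) + 1)) * (semivar μ (Set.univ : Set Z)).toReal := by
    intro k
    have hb1k : ∀ z, ‖g₁ k z‖ ≤ Cb + 1 := by
      intro z
      have h := norm_add_le (g₁ k z - h₁ z) (h₁ z)
      rw [sub_add_cancel] at h
      have := happ1 k z
      have := hb1 z
      have := hfrac1 k
      linarith
    have hb2k : ∀ z, ‖g₂ k z‖ ≤ Cb + 1 := by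
      intro z
      have h := norm_add_le (g₂ k z - h₂ z) (h₂ z)
      rw [sub_add_cancel] at h
      have := happ2 k z
      have := hb2 z
      have := hfrac1 k
      linarith
    have hfar : ∀ z, ‖g₁ k z - g₂ k z‖ ≤ 2 * Cb + 2 := by
      intro z
      have h := norm_sub_le (g₁ k z) (g₂ k z)
      have := hb1k z
      have := hb2k z
      linarith
    have hnear' : ∀ z ∉ S, ‖g₁ k z - g₂ k z‖ ≤ δ + 2 / ((k:ℝ) + 1) := by
      intro z hz
      have h1 := happ1 k z
      have h2 := happ2 k z
      have h3 := hnear z hz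
      have hdec : g₁ k z - g₂ k z
          = (g₁ k z - h₁ z) + (h₁ z - h₂ z) + (h₂ z - g₂ k z) := by abel
      have h4 : ‖g₁ k z - g₂ k z‖
          ≤ ‖g₁ k z - h₁ z‖ + ‖h₁ z - h₂ z‖ + ‖h₂ z - g₂ k z‖ := by
        rw [hdec]
        have ha := norm_add_le ((g₁ k z - h₁ z) + (h₁ z - h₂ z)) (h₂ z - g₂ k z)
        have hb := norm_add_le (g₁ k z - h₁ z) (h₁ z - h₂ z)
        linarith
      have h5 : ‖h₂ z - g₂ k z‖ = ‖g₂ k z - h₂ z‖ := norm_sub_rev _ _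
      rw [h5] at h4
      have : (1:ℝ) / ((k:ℝ) + 1) + δ + 1 / ((k:ℝ) + 1) = δ + 2 / ((k:ℝ) + 1) := by ring
      linarith
    exact cv_comparison hμ hfin hb1k hb2k hS (by positivity) (by positivity)
      hnear' hfar (hcv1 k) (hcv2 k)
  have hlim : Tendsto (fun k => ‖w₁ k - w₂ k‖) atTop (𝓝 ‖y₁ - y₂‖) := (hw1.sub hw2).norm
  have hrhs : Tendsto (fun k : ℕ => (2 * Cb + 2) * (semivar μ S).toReal
      + (δ + 2 / ((k:ℝ) + 1)) * (semivar μ (Set.univ : Set Z)).toReal) atTop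
      (𝓝 ((2 * Cb + 2) * (semivar μ S).toReal
        + δ * (semivar μ (Set.univ : Set Z)).toReal)) := by
    have h2k : Tendsto (fun k : ℕ => 2 / ((k:ℝ) + 1)) atTop (𝓝 0) := by
      have h := tendsto_one_div_add_atTop_nhds_zero_nat.const_mul (2:ℝ)
      rw [mul_zero] at h
      refine h.congr fun k => ?_
      rw [mul_one_div]
    have h3 : Tendsto (fun k : ℕ => δ + 2 / ((k:ℝ) + 1)) atTop (𝓝 (δ + 0)) :=
      tendsto_const_nhds.add h2k
    rw [add_zero] at h3
    exact tendsto_const_nhds.add (h3.mul_const _)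
  exact le_of_tendsto_of_tendsto' hlim hrhs hk

end Integral
/-- Bounded Norm Convergence Theorem for i-measures: if uniformly bounded measurable
functions with separable ranges converge pointwise in norm, their integrals converge in
the norm of `F`. -/
theorem iMeasure_bounded_norm_convergence {Z E F : Type*} [MeasurableSpace Z]
    [NormedAddCommGroup E] [NormedSpace ℝ E] [MeasurableSpace E] [BorelSpace E]
    [NormedAddCommGroup F] [NormedSpace ℝ F] [CompleteSpace F]
    (μ : Set Z → E →L[ℝ] F) (hμ : IsIMeasure μ)
    (f : ℕ → Z → E) (g : Z → E)
    (hfm : ∀ n, Measurable (f n))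
    (hfs : ∀ n, TopologicalSpace.IsSeparable (Set.range (f n)))
    (hgm : Measurable g) (hgs : TopologicalSpace.IsSeparable (Set.range g))
    (hbd : ∃ C : ℝ, ∀ n z, ‖f n z‖ ≤ C)
    (hptw : ∀ z, Tendsto (fun n => f n z) atTop (𝓝 (g z)))
    (y : ℕ → F) (w : F)
    (hy : ∀ n, HasIntegral μ (f n) (y n)) (hw : HasIntegral μ g w) :
    Tendsto y atTop (𝓝 w) := by
  classical
  obtain ⟨C, hC⟩ := hbd
  have hC'0 : (0:ℝ) ≤ max C 0 := le_max_right _ _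
  have hfC : ∀ n z, ‖f n z‖ ≤ max C 0 := fun n z => (hC n z).trans (le_max_left _ _)
  have hgC : ∀ z, ‖g z‖ ≤ max C 0 :=
    fun z => le_of_tendsto ((hptw z).norm) (Filter.Eventually.of_forall fun n => hfC n z)
  have hfin := semivar_univ_ne_top hμ
  have hSV0 : (0:ℝ) ≤ (semivar μ (Set.univ : Set Z)).toReal := ENNReal.toReal_nonneg
  rw [Metric.tendsto_atTop]
  intro ε₀ hε₀
  have hc0 : (0:ℝ) < 2 * max C 0 + 2 := by linarith
  set ε' := min 1 (ε₀ / ((2 * max C 0 + 2) + (semivar μ (Set.univ : Set Z)).toReal + 1))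
    with hε'def
  have hε' : 0 < ε' :=
    lt_min one_pos (div_pos hε₀ (by linarith))
  -- measurability of the pointwise distances
  have hsmf : ∀ n, MeasureTheory.StronglyMeasurable (f n) := fun n =>
    stronglyMeasurable_iff_measurable_separable.mpr ⟨hfm n, hfs n⟩
  have hsmg : MeasureTheory.StronglyMeasurable g :=
    stronglyMeasurable_iff_measurable_separable.mpr ⟨hgm, hgs⟩
  have hφm : ∀ n, Measurable fun z => ‖f n z - g z‖ := fun n =>
    ((hsmf n).sub hsmg).norm.measurable
  -- Egorov-type sets
  set Dn : ℕ → Set Z := fun N => ⋃ j, {z | ε' < ‖f (N + j) z - g z‖} with hDn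
  have hDm : ∀ N, MeasurableSet (Dn N) := by
    intro N
    exact MeasurableSet.iUnion fun j => measurableSet_lt measurable_const (hφm (N + j))
  have hDmem : ∀ N z, z ∈ Dn N ↔ ∃ j, ε' < ‖f (N + j) z - g z‖ := by
    intro N z
    rw [hDn]
    simp [Set.mem_iUnion]
  have hDanti : ∀ N, Dn (N + 1) ⊆ Dn N := by
    intro N z hz
    obtain ⟨j, hj⟩ := (hDmem (N + 1) z).mp hz
    exact (hDmem N z).mpr ⟨j + 1, by rwa [show N + (j + 1) = N + 1 + j by omega]⟩
  have hDanti' : ∀ m k, m ≤ k → Dn k ⊆ Dn m := by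
    intro m k hmk
    induction k with
    | zero => rw [Nat.le_zero.mp hmk]
    | succ k ih =>
      rcases Nat.lt_or_ge m (k + 1) with h | h
      · exact (hDanti k).trans (ih (by omega))
      · rw [Nat.le_antisymm hmk h]
  set R : ℕ → Set Z := fun m => Dn m \ Dn (m + 1) with hR
  have hRm : ∀ m, MeasurableSet (R m) := fun m => (hDm m).diff (hDm (m + 1))
  have hRd : Pairwise (Function.onFun Disjoint R) := by
    have key : ∀ m m', m < m' → Disjoint (R m) (R m') := by
      intro m m' hmm
      have h1 : R m' ⊆ Dn (m + 1) := (Set.diff_subset).trans (hDanti' (m + 1) m' hmm)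
      exact disjoint_sdiff_self_left.mono_right h1
    intro m m' hmm
    rcases lt_or_gt_of_ne hmm with h | h
    · exact key m m' h
    · exact (key m' m h).symm
  have hescape : ∀ z, ∃ m, z ∉ Dn m := by
    intro z
    obtain ⟨N, hN⟩ := Metric.tendsto_atTop.mp (hptw z) ε' hε'
    refine ⟨N, fun hz => ?_⟩
    obtain ⟨j, hj⟩ := (hDmem N z).mp hz
    have h := hN (N + j) (by omega)
    rw [dist_eq_norm] at h
    exact absurd hj (not_lt.mpr h.le)
  have hDT : ∀ N, Dn N = ⋃ j, R (N + j) := by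
    intro N
    apply Set.Subset.antisymm
    · intro z hz
      have hex : ∃ m, z ∉ Dn m := hescape z
      have hzm₀ : z ∉ Dn (Nat.find hex) := Nat.find_spec hex
      have hm₀pos : N < Nat.find hex := by
        by_contra hcon
        push_neg at hcon
        exact hzm₀ (hDanti' (Nat.find hex) N hcon hz)
      have hzprev : z ∈ Dn (Nat.find hex - 1) := by
        by_contra hcon
        exact (Nat.find_min hex (show Nat.find hex - 1 < Nat.find hex by omega)) hcon
      refine Set.mem_iUnion.mpr ⟨Nat.find hex - 1 - N, ?_⟩
      rw [hR]
      dsimp only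
      rw [show N + (Nat.find hex - 1 - N) = Nat.find hex - 1 by omega]
      refine ⟨hzprev, ?_⟩
      rwa [show Nat.find hex - 1 + 1 = Nat.find hex by omega]
    · refine Set.iUnion_subset fun j => ?_
      exact (Set.diff_subset).trans (hDanti' N (N + j) (by omega))
  obtain ⟨N₁, hN₁⟩ := tail_semivar_small hμ hRm hRd hε'
  rw [← hDT] at hN₁
  refine ⟨N₁, fun n hn => ?_⟩
  have hnear : ∀ z ∉ Dn N₁, ‖f n z - g z‖ ≤ ε' := by
    intro z hz
    by_contra hcon
    push_neg at hcon
    exact hz ((hDmem N₁ z).mpr ⟨n - N₁, by rwa [show N₁ + (n - N₁) = n by omega]⟩)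
  have hcomp := integral_comparison hμ hfin hC'0 (fun z => hfC n z) hgC (hDm N₁) hε'
    hnear (hy n) hw
  have hsvS : (semivar μ (Dn N₁)).toReal ≤ ε' := by
    have h := ENNReal.toReal_mono ENNReal.ofReal_ne_top hN₁
    rwa [ENNReal.toReal_ofReal hε'.le] at h
  rw [dist_eq_norm]
  have hlast : ‖y n - w‖ ≤ (2 * max C 0 + 2) * ε'
      + ε' * (semivar μ (Set.univ : Set Z)).toReal := by
    refine hcomp.trans ?_
    exact add_le_add (mul_le_mul_of_nonneg_left hsvS hc0.le) le_rfl
  have hfinal : (2 * max C 0 + 2) * ε'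
      + ε' * (semivar μ (Set.univ : Set Z)).toReal < ε₀ := by
    have h1 : (2 * max C 0 + 2) * ε' + ε' * (semivar μ (Set.univ : Set Z)).toReal
        = ε' * ((2 * max C 0 + 2) + (semivar μ (Set.univ : Set Z)).toReal) := by ring
    rw [h1]
    have h2 : ε' ≤ ε₀ / ((2 * max C 0 + 2) + (semivar μ (Set.univ : Set Z)).toReal + 1) :=
      min_le_right _ _
    have h3 : ε' * ((2 * max C 0 + 2) + (semivar μ (Set.univ : Set Z)).toReal)
        ≤ (ε₀ / ((2 * max C 0 + 2) + (semivar μ (Set.univ : Set Z)).toReal + 1))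
          * ((2 * max C 0 + 2) + (semivar μ (Set.univ : Set Z)).toReal) :=
      mul_le_mul_of_nonneg_right h2 (by linarith)
    have h4 : (ε₀ / ((2 * max C 0 + 2) + (semivar μ (Set.univ : Set Z)).toReal + 1))
        * ((2 * max C 0 + 2) + (semivar μ (Set.univ : Set Z)).toReal) < ε₀ := by
      rw [div_mul_eq_mul_div, div_lt_iff₀ (by linarith)]
      nlinarith
    linarith
  linarith
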